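/- Let H be a 2-connected r-uniform hypergraph with r ≥ 3, and let S_1, S_2 be disjoint vertex sets each of size at least 2. Then there exist two Berge paths, one from a vertex u_1 ∈ S_1 to a vertex v_1 ∈ S_2 and another from u_2 ∈ S_1 (u_2 ≠ u_1) to v_2 ∈ S_2 (v_2 ≠ v_1), sharing no defining vertices and no defining hyperedges. -/

import Mathlib

open Finset

/-- A hypergraph (edge set `E`) is connected. -/
def HConnected {V : Type*} (E : Finset (Finset V)) : Prop :=
  ¬ ∃ A : Set V, A.Nonempty ∧ Aᶜ.Nonempty ∧ ∀ e ∈ E, (↑e ⊆ A ∨ ↑e ⊆ Aᶜ)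

/-- `v` is a cut vertex of the hypergraph `E`: there is a partition
`V = {v} ∪ V₁ ∪ V₂` with `V₁, V₂` nonempty such that every hyperedge is contained
in `{v} ∪ V₁` or in `{v} ∪ V₂`. -/
def HCutVertex {V : Type*} (E : Finset (Finset V)) (v : V) : Prop :=
  ∃ V₁ V₂ : Set V, V₁.Nonempty ∧ V₂.Nonempty ∧ Disjoint V₁ V₂ ∧
    v ∉ V₁ ∧ v ∉ V₂ ∧ (∀ x : V, x = v ∨ x ∈ V₁ ∨ x ∈ V₂) ∧
    ∀ e ∈ E, (↑e ⊆ insert v V₁ ∨ ↑e ⊆ insert v V₂)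

/-- `e` is a cut hyperedge of `E`: there is a partition `V = V₁ ∪ V₂` with
`V₁, V₂` nonempty such that every hyperedge other than `e` is contained in `V₁`
or in `V₂`. -/
def HCutEdge {V : Type*} (E : Finset (Finset V)) (e : Finset V) : Prop :=
  e ∈ E ∧ ∃ V₁ V₂ : Set V, V₁.Nonempty ∧ V₂.Nonempty ∧ Disjoint V₁ V₂ ∧
    (∀ x : V, x ∈ V₁ ∨ x ∈ V₂) ∧
    ∀ f ∈ E, f ≠ e → (↑f ⊆ V₁ ∨ ↑f ⊆ V₂)

/-- A hypergraph is 2-connected: connected, with no cut vertex and no cut hyperedge. -/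
def HTwoConnected {V : Type*} (E : Finset (Finset V)) : Prop :=
  HConnected E ∧ (∀ v : V, ¬ HCutVertex E v) ∧ ∀ e : Finset V, ¬ HCutEdge E e

section BergeAuxSection

namespace BergeAux

variable {V : Type*}

/-- A walk in digraph `D` from `A` to `B`, as a nonempty list of vertices. -/
def IsWalk (D : V → V → Prop) (A B : Set V) (l : List V) : Prop :=
  (∃ a ∈ A, l.head? = some a) ∧ (∃ b ∈ B, l.getLast? = some b) ∧ l.Chain' D

/-- `C` separates `A` from `B` in `D`. -/
def Sep (D : V → V → Prop) (A B C : Set V) : Prop :=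
  ∀ l : List V, IsWalk D A B l → ∃ v ∈ l, v ∈ C

lemma mem_of_getLast? {l : List V} {a : V} (h : l.getLast? = some a) : a ∈ l := by
  obtain ⟨h', rfl⟩ := List.mem_getLast?_eq_getLast (by rw [h]; rfl)
  exact List.getLast_mem h'

lemma head?_eq_head?_append_cons (l₁ l₂ l₂' : List V) (z : V) :
    (l₁ ++ z :: l₂).head? = (l₁ ++ z :: l₂').head? := by
  cases l₁ <;> simp

lemma getLast?_append_cons (l₁ l₂ : List V) (z : V) :
    (l₁ ++ z :: l₂).getLast? = (z :: l₂).getLast? :=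
  List.getLast?_append_of_ne_nil _ (by simp)

lemma head?_append_of_ne_nil (l l' : List V) (h : l ≠ []) :
    (l ++ l').head? = l.head? := by
  cases l <;> simp_all

lemma eq_cons_of_head? {l : List V} {a : V} (h : l.head? = some a) : l = a :: l.tail := by
  cases l <;> simp_all

lemma chain'_glue {R : V → V → Prop} {l₁ l₂ : List V} {a : V}
    (h₁ : List.Chain' R l₁) (h₂ : List.Chain' R l₂)
    (hl : l₁.getLast? = some a) (hh : l₂.head? = some a) :
    List.Chain' R (l₁ ++ l₂.tail) := by
  rcases l₂ with _ | ⟨b, t⟩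
  · simp at hh
  · simp only [List.head?_cons, Option.some.injEq] at hh
    subst hh
    unfold List.Chain'; rw [List.isChain_append]
    refine ⟨h₁, (List.isChain_cons.1 h₂).2, ?_⟩
    intro x hx y hy
    rw [hl, Option.mem_def, Option.some.injEq] at hx
    subst hx
    exact (List.isChain_cons.1 h₂).1 y hy

lemma exists_first_hit {T : Set V} : ∀ {l : List V}, (∃ v ∈ l, v ∈ T) →
    ∃ l₁ z l₂, l = l₁ ++ z :: l₂ ∧ z ∈ T ∧ ∀ v ∈ l₁, v ∉ T := by
  intro l
  induction l with
  | nil => rintro ⟨v, hv, -⟩; simp at hv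
  | cons a t ih =>
    intro h
    by_cases ha : a ∈ T
    · exact ⟨[], a, t, by simp, ha, by simp⟩
    · obtain ⟨v, hv, hvT⟩ := h
      rcases List.mem_cons.1 hv with rfl | hv
      · exact absurd hvT ha
      · obtain ⟨l₁, z, l₂, rfl, hz, hl₁⟩ := ih ⟨v, hv, hvT⟩
        refine ⟨a :: l₁, z, l₂, rfl, hz, ?_⟩
        intro u hu
        rcases List.mem_cons.1 hu with rfl | hu
        exacts [ha, hl₁ u hu]

lemma exists_last_hit {T : Set V} : ∀ {l : List V}, (∃ v ∈ l, v ∈ T) →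
    ∃ l₁ z l₂, l = l₁ ++ z :: l₂ ∧ z ∈ T ∧ ∀ v ∈ l₂, v ∉ T := by
  intro l
  induction l with
  | nil => rintro ⟨v, hv, -⟩; simp at hv
  | cons a t ih =>
    intro h
    by_cases ht : ∃ v ∈ t, v ∈ T
    · obtain ⟨l₁, z, l₂, rfl, hz, hl₂⟩ := ih ht
      exact ⟨a :: l₁, z, l₂, rfl, hz, hl₂⟩
    · push_neg at ht
      obtain ⟨v, hv, hvT⟩ := h
      rcases List.mem_cons.1 hv with rfl | hv
      · exact ⟨[], v, t, rfl, hvT, ht⟩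
      · exact absurd hvT (ht v hv)

lemma not_nodup_split {l : List V} (h : ¬ l.Nodup) :
    ∃ (l₁ l₂ l₃ : List V) (a : V), l = l₁ ++ a :: l₂ ++ a :: l₃ := by
  induction l with
  | nil => simp at h
  | cons x t ih =>
    by_cases hx : x ∈ t
    · obtain ⟨s, u, rfl⟩ := List.append_of_mem hx
      exact ⟨[], s, u, x, by simp⟩
    · have ht : ¬ t.Nodup := fun hn => h (List.nodup_cons.2 ⟨hx, hn⟩)
      obtain ⟨l₁, l₂, l₃, a, rfl⟩ := ih ht
      exact ⟨x :: l₁, l₂, l₃, a, by simp⟩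

lemma exists_nodup_chain {R : V → V → Prop} :
    ∀ (n : ℕ) (l : List V), l.length ≤ n → List.Chain' R l →
    ∃ l', l'.Nodup ∧ List.Chain' R l' ∧ l'.head? = l.head? ∧
      l'.getLast? = l.getLast? ∧ ∀ v ∈ l', v ∈ l := by
  intro n
  induction n with
  | zero =>
    intro l hl hc
    rw [Nat.le_zero, List.length_eq_zero_iff] at hl
    subst hl
    exact ⟨[], by simp, by simp [List.Chain'], rfl, rfl, by simp⟩
  | succ n ih =>
    intro l hl hc
    by_cases hnd : l.Nodup
    · exact ⟨l, hnd, hc, rfl, rfl, fun v hv => hv⟩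
    · obtain ⟨l₁, l₂, l₃, a, rfl⟩ := not_nodup_split hnd
      set L := l₁ ++ a :: l₃ with hL
      have hlen : L.length ≤ n := by
        simp only [hL, List.length_append, List.length_cons] at hl ⊢
        omega
      have hpre : (l₁ ++ [a]) <+: (l₁ ++ a :: l₂ ++ a :: l₃) :=
        ⟨l₂ ++ a :: l₃, by simp⟩
      have hsuf : (a :: l₃) <:+ (l₁ ++ a :: l₂ ++ a :: l₃) :=
        ⟨l₁ ++ a :: l₂, by simp⟩
      have hcL : List.Chain' R L := by
        have := chain'_glue (hc.prefix hpre) (hc.suffix hsuf)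
          (List.getLast?_concat (l := l₁)) (List.head?_cons)
        simpa [hL] using this
      obtain ⟨l', h1, h2, h3, h4, h5⟩ := ih L hlen hcL
      refine ⟨l', h1, h2, ?_, ?_, ?_⟩
      · have hbig : l₁ ++ a :: l₂ ++ a :: l₃ = l₁ ++ a :: (l₂ ++ a :: l₃) := by simp
        rw [h3, hL, hbig]
        exact head?_eq_head?_append_cons l₁ l₃ (l₂ ++ a :: l₃) a
      · have hbig : l₁ ++ a :: l₂ ++ a :: l₃ = (l₁ ++ a :: l₂) ++ a :: l₃ := by simp
        rw [h4, hL, hbig, getLast?_append_cons, getLast?_append_cons]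
      · intro v hv
        have := h5 v hv
        rw [hL] at this
        simp only [List.mem_append, List.mem_cons] at this ⊢
        tauto

lemma chain'_avoid_source {D : V → V → Prop} {x y : V} :
    ∀ {l : List V}, List.Chain' D l → x ∉ l.dropLast →
      List.Chain' (fun a b => D a b ∧ (a, b) ≠ (x, y)) l := by
  intro l
  induction l with
  | nil => intro _ _; simp [List.Chain']
  | cons a t ih =>
    intro hc hx
    rcases t with _ | ⟨b, t'⟩
    · simp [List.Chain']
    · rw [List.dropLast_cons₂, List.mem_cons] at hx
      push_neg at hx
      unfold List.Chain' at hc ⊢; rw [List.isChain_cons_cons] at hc ⊢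
      refine ⟨⟨hc.1, ?_⟩, ih hc.2 hx.2⟩
      intro he
      exact hx.1 (by injection he with h1 h2; exact h1.symm) -- a = x

lemma chain'_avoid_target {D : V → V → Prop} {x y : V} :
    ∀ {l : List V}, List.Chain' D l → y ∉ l.tail →
      List.Chain' (fun a b => D a b ∧ (a, b) ≠ (x, y)) l := by
  intro l
  induction l with
  | nil => intro _ _; simp [List.Chain']
  | cons a t ih =>
    intro hc hy
    rcases t with _ | ⟨b, t'⟩
    · simp [List.Chain']
    · simp only [List.tail_cons, List.mem_cons] at hy
      push_neg at hy
      unfold List.Chain' at hc ⊢; rw [List.isChain_cons_cons] at hc ⊢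
      refine ⟨⟨hc.1, ?_⟩, ih hc.2 (by simpa using hy.2)⟩
      intro he
      exact hy.1 (by injection he with h1 h2; exact h2.symm)

lemma mem_tail_append_cons {u v : V} {l₁ l₂ : List V} (h : u ∈ l₂) :
    u ∈ (l₁ ++ v :: l₂).tail := by
  cases l₁ with
  | nil => simpa using h
  | cons a t => simp [List.mem_append, h]

lemma mem_dropLast_append_cons {u v : V} {l₁ l₂ : List V} (h : u ∈ l₁) :
    u ∈ (l₁ ++ v :: l₂).dropLast := by
  rw [List.dropLast_append_cons]
  exact List.mem_append_left _ h

lemma ne_nil_of_head? {l : List V} {a : V} (h : l.head? = some a) : l ≠ [] := by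
  cases l <;> simp_all

lemma ne_nil_of_getLast? {l : List V} {a : V} (h : l.getLast? = some a) : l ≠ [] := by
  cases l <;> simp_all

/-- Trim a walk ending in `{c,x}` (with `x` not on it) so that it meets `c` only
at its very end. -/
lemma trim_end {D : V → V → Prop} {A : Set V} {c x : V} {p : List V}
    (hw : IsWalk D A {c, x} p) (hnd : p.Nodup) (hxp : x ∉ p) (hcx : c ≠ x) :
    ∃ q, IsWalk D A {c} q ∧ q.Nodup ∧ (∀ v ∈ q, v ∈ p) ∧ c ∉ q.dropLast ∧ x ∉ q := by
  obtain ⟨ha, ⟨b, hb, hbl⟩, hchain⟩ := hw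
  obtain ⟨l₁, z, l₂, rfl, hz, hl₁⟩ :=
    exists_first_hit ⟨b, mem_of_getLast? hbl, hb⟩
  simp only [Set.mem_insert_iff, Set.mem_singleton_iff] at hz
  have hzc : z = c := by
    rcases hz with hz | hz
    · exact hz
    · exact absurd (hz ▸ (by simp : z ∈ l₁ ++ z :: l₂)) hxp
  obtain rfl := hzc.symm
  have hpre : (l₁ ++ [c]) <+: (l₁ ++ c :: l₂) := ⟨l₂, by simp⟩
  refine ⟨l₁ ++ [c], ⟨?_, ⟨c, rfl, List.getLast?_concat⟩, hchain.prefix hpre⟩,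
    hpre.sublist.nodup hnd, fun v hv => hpre.subset hv, ?_, ?_⟩
  · obtain ⟨a, haA, hah⟩ := ha
    exact ⟨a, haA, (head?_eq_head?_append_cons l₁ [] l₂ c).trans hah⟩
  · rw [List.dropLast_concat]
    exact fun hcm => hl₁ c hcm (Or.inl rfl)
  · simp only [List.mem_append, List.mem_singleton]
    rintro (hx | rfl)
    · exact hl₁ x hx (Or.inr rfl)
    · exact hcx rfl

/-- Trim a walk starting in `{c,y}` (with `y` not on it) so that it meets `c` only
at its very start. -/
lemma trim_start {D : V → V → Prop} {B : Set V} {c y : V} {p : List V}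
    (hw : IsWalk D {c, y} B p) (hnd : p.Nodup) (hyp : y ∉ p) (hcy : c ≠ y) :
    ∃ r, IsWalk D {c} B r ∧ r.Nodup ∧ (∀ v ∈ r, v ∈ p) ∧ c ∉ r.tail ∧ y ∉ r := by
  obtain ⟨⟨a, haT, hah⟩, hb, hchain⟩ := hw
  have ham : a ∈ p := by rw [eq_cons_of_head? hah]; exact List.mem_cons_self
  obtain ⟨l₁, z, l₂, rfl, hz, hl₂⟩ := exists_last_hit ⟨a, ham, haT⟩
  simp only [Set.mem_insert_iff, Set.mem_singleton_iff] at hz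
  have hzc : z = c := by
    rcases hz with hz | hz
    · exact hz
    · exact absurd (hz ▸ (by simp : z ∈ l₁ ++ z :: l₂)) hyp
  obtain rfl := hzc.symm
  have hsuf : (c :: l₂) <:+ (l₁ ++ c :: l₂) := ⟨l₁, rfl⟩
  refine ⟨c :: l₂, ⟨⟨c, rfl, rfl⟩, ?_, hchain.suffix hsuf⟩,
    hsuf.sublist.nodup hnd, fun v hv => hsuf.subset hv, ?_, ?_⟩
  · obtain ⟨b', hbB, hgb⟩ := hb
    refine ⟨b', hbB, ?_⟩
    rw [getLast?_append_cons] at hgb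
    exact hgb
  · exact fun hcm => hl₂ c hcm (Or.inl rfl)
  · simp only [List.mem_cons]
    rintro (rfl | hy)
    · exact hcy rfl
    · exact hl₂ y hy (Or.inr rfl)

/-- The core disjointness argument: a vertex `v ≠ c` shared between an `A`-side
piece and a `B`-side piece yields an `A`–`B` walk avoiding `c`. -/
lemma cross {D : V → V → Prop} {A B : Set V} {c : V} (hc : Sep D A B {c})
    {q r : List V} {v : V}
    (hq1 : ∃ a ∈ A, q.head? = some a) (hq2 : List.Chain' D q) (hq3 : c ∉ q.dropLast)
    (hr1 : ∃ b ∈ B, r.getLast? = some b) (hr2 : List.Chain' D r) (hr3 : c ∉ r.tail)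
    (hvq : v ∈ q) (hvr : v ∈ r) (hvc : v ≠ c) : False := by
  obtain ⟨q₁, q₂, rfl⟩ := List.append_of_mem hvq
  obtain ⟨r₁, r₂, rfl⟩ := List.append_of_mem hvr
  have hch : List.Chain' D ((q₁ ++ [v]) ++ (v :: r₂).tail) :=
    chain'_glue (hq2.prefix ⟨q₂, by simp⟩) (hr2.suffix ⟨r₁, rfl⟩)
      (List.getLast?_concat) rfl
  have hL : IsWalk D A B (q₁ ++ v :: r₂) := by
    refine ⟨?_, ?_, by simpa using hch⟩
    · obtain ⟨a, haA, hha⟩ := hq1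
      exact ⟨a, haA, (head?_eq_head?_append_cons q₁ r₂ q₂ v).trans hha⟩
    · obtain ⟨b, hbB, hgb⟩ := hr1
      refine ⟨b, hbB, ?_⟩
      rw [getLast?_append_cons] at hgb ⊢
      exact hgb
  obtain ⟨u, hu, hu'⟩ := hc _ hL
  rw [Set.mem_singleton_iff] at hu'
  subst hu'
  rcases List.mem_append.1 hu with h1 | h2
  · exact hq3 (mem_dropLast_append_cons h1)
  · rcases List.mem_cons.1 h2 with rfl | h3
    · exact hvc rfl
    · exact hr3 (mem_tail_append_cons h3)

/-- Orient two disjoint walks ending in the pair `{c,x}`. -/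
lemma orient_end {D : V → V → Prop} {A : Set V} {c x : V} (hcx : c ≠ x)
    {p₁ p₂ : List V} (h1 : IsWalk D A {c, x} p₁) (h2 : IsWalk D A {c, x} p₂)
    (nd1 : p₁.Nodup) (nd2 : p₂.Nodup) (hd : p₁.Disjoint p₂) :
    ∃ pa pb, IsWalk D A {c, x} pa ∧ IsWalk D A {c, x} pb ∧ pa.Nodup ∧ pb.Nodup ∧
      pa.Disjoint pb ∧ x ∉ pa ∧ c ∉ pb := by
  obtain ⟨b₁, hb₁, hgb₁⟩ := h1.2.1
  obtain ⟨b₂, hb₂, hgb₂⟩ := h2.2.1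
  have hm₁ : b₁ ∈ p₁ := mem_of_getLast? hgb₁
  have hm₂ : b₂ ∈ p₂ := mem_of_getLast? hgb₂
  simp only [Set.mem_insert_iff, Set.mem_singleton_iff] at hb₁ hb₂
  rcases hb₁ with h₁c | h₁x
  · rw [h₁c] at hm₁
    refine ⟨p₁, p₂, h1, h2, nd1, nd2, hd, fun hxp₁ => ?_, fun hcp₂ => hd hm₁ hcp₂⟩
    rcases hb₂ with h₂c | h₂x
    · rw [h₂c] at hm₂; exact hd hm₁ hm₂
    · rw [h₂x] at hm₂; exact hd hxp₁ hm₂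
  · rw [h₁x] at hm₁
    refine ⟨p₂, p₁, h2, h1, nd2, nd1, hd.symm, fun hxp₂ => hd hm₁ hxp₂, fun hcp₁ => ?_⟩
    rcases hb₂ with h₂c | h₂x
    · rw [h₂c] at hm₂; exact hd hcp₁ hm₂
    · rw [h₂x] at hm₂; exact hd hm₁ hm₂


/-- Orient two disjoint walks starting in the pair `{c,y}`. -/
lemma orient_start {D : V → V → Prop} {B : Set V} {c y : V} (hcy : c ≠ y)
    {p₁ p₂ : List V} (h1 : IsWalk D {c, y} B p₁) (h2 : IsWalk D {c, y} B p₂)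
    (nd1 : p₁.Nodup) (nd2 : p₂.Nodup) (hd : p₁.Disjoint p₂) :
    ∃ pa pb, IsWalk D {c, y} B pa ∧ IsWalk D {c, y} B pb ∧ pa.Nodup ∧ pb.Nodup ∧
      pa.Disjoint pb ∧ y ∉ pa ∧ c ∉ pb := by
  obtain ⟨a₁, ha₁, hha₁⟩ := h1.1
  obtain ⟨a₂, ha₂, hha₂⟩ := h2.1
  have hm₁ : a₁ ∈ p₁ := by rw [eq_cons_of_head? hha₁]; exact List.mem_cons_self
  have hm₂ : a₂ ∈ p₂ := by rw [eq_cons_of_head? hha₂]; exact List.mem_cons_self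
  simp only [Set.mem_insert_iff, Set.mem_singleton_iff] at ha₁ ha₂
  rcases ha₁ with h₁c | h₁y
  · rw [h₁c] at hm₁
    refine ⟨p₁, p₂, h1, h2, nd1, nd2, hd, fun hyp₁ => ?_, fun hcp₂ => hd hm₁ hcp₂⟩
    rcases ha₂ with h₂c | h₂y
    · rw [h₂c] at hm₂; exact hd hm₁ hm₂
    · rw [h₂y] at hm₂; exact hd hyp₁ hm₂
  · rw [h₁y] at hm₁
    refine ⟨p₂, p₁, h2, h1, nd2, nd1, hd.symm, fun hyp₂ => hd hm₁ hyp₂, fun hcp₁ => ?_⟩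
    rcases ha₂ with h₂c | h₂y
    · rw [h₂c] at hm₂; exact hd hcp₁ hm₂
    · rw [h₂y] at hm₂; exact hd hm₁ hm₂

/-- Menger's theorem for two disjoint paths, digraph version, by induction on the
number of arcs. -/
theorem menger_aux [Fintype V] [Nonempty V] :
    ∀ (n : ℕ) (D : V → V → Prop) (A B : Set V),
      {p : V × V | D p.1 p.2}.ncard ≤ n →
      (∀ c : V, ¬ Sep D A B {c}) →
      ∃ l₁ l₂ : List V, IsWalk D A B l₁ ∧ IsWalk D A B l₂ ∧
        l₁.Nodup ∧ l₂.Nodup ∧ l₁.Disjoint l₂ := by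
  intro n
  induction n using Nat.strong_induction_on with
  | _ n ih =>
  intro D A B hcard h
  by_cases hAB : (A ∩ B).Nonempty
  · -- a common vertex: one trivial path, one path avoiding it
    obtain ⟨v, hvA, hvB⟩ := hAB
    have hv := h v
    rw [Sep] at hv
    push_neg at hv
    obtain ⟨l, hl, hlv⟩ := hv
    obtain ⟨l', hnd, hch, hh, hgl, hsub⟩ := exists_nodup_chain l.length l le_rfl hl.2.2
    refine ⟨l', [v], ⟨?_, ?_, hch⟩, ⟨⟨v, hvA, rfl⟩, ⟨v, hvB, rfl⟩, by simp [List.Chain']⟩,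
      hnd, by simp, ?_⟩
    · obtain ⟨a, haA, hha⟩ := hl.1
      exact ⟨a, haA, hh.trans hha⟩
    · obtain ⟨b, hbB, hgb⟩ := hl.2.1
      exact ⟨b, hbB, hgl.trans hgb⟩
    · intro u hu hu'
      rw [List.mem_singleton] at hu'
      subst hu'
      exact (hlv u (hsub u hu)) rfl
  · -- A ∩ B = ∅ : find an arc on some A–B path, delete it
    have hne : Nonempty V := inferInstance
    obtain ⟨c₀⟩ := hne
    have h0 := h c₀
    rw [Sep] at h0
    push_neg at h0
    obtain ⟨l₀, hl₀, -⟩ := h0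
    obtain ⟨p₀, hnd₀, hch₀, hh₀, hg₀, -⟩ := exists_nodup_chain l₀.length l₀ le_rfl hl₀.2.2
    obtain ⟨a₀, ha₀, hha₀⟩ := hl₀.1
    obtain ⟨b₀, hb₀, hgb₀⟩ := hl₀.2.1
    have hh₀' : p₀.head? = some a₀ := hh₀.trans hha₀
    have hg₀' : p₀.getLast? = some b₀ := hg₀.trans hgb₀
    have hab : a₀ ≠ b₀ := fun he => hAB ⟨a₀, ha₀, he ▸ hb₀⟩
    obtain ⟨x, y, t, hxyt, hDxy, hxy⟩ : ∃ x y t, p₀ = x :: y :: t ∧ D x y ∧ x ≠ y := by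
      match p₀, hh₀', hg₀', hch₀, hnd₀ with
      | [], h1, _, _, _ => simp at h1
      | [u], h1, h2, _, _ =>
        exfalso
        simp only [List.head?_cons, Option.some.injEq] at h1
        simp only [List.getLast?_singleton, Option.some.injEq] at h2
        exact hab (h1.symm.trans h2)
      | u :: w :: t, h1, h2, h3, h4 =>
        refine ⟨u, w, t, rfl, (List.isChain_cons_cons.1 h3).1, ?_⟩
        intro he
        rw [List.nodup_cons] at h4
        exact h4.1 (he ▸ List.mem_cons_self)
    set D' : V → V → Prop := fun a b => D a b ∧ (a, b) ≠ (x, y) with hD'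
    have hD'le : ∀ {l : List V}, List.Chain' D' l → List.Chain' D l :=
      fun hl => hl.imp fun a b hab => hab.1
    have harcs : {p : V × V | D' p.1 p.2} = {p : V × V | D p.1 p.2} \ {(x, y)} := by
      ext ⟨a, b⟩
      simp only [hD', Set.mem_setOf_eq, Set.mem_diff, Set.mem_singleton_iff]
    have hlt : {p : V × V | D' p.1 p.2}.ncard < n := by
      have h1 : {p : V × V | D' p.1 p.2} ⊂ {p : V × V | D p.1 p.2} := by
        rw [harcs]
        refine Set.diff_subset.ssubset_of_ne fun he => ?_
        have h2 : (x, y) ∈ {p : V × V | D p.1 p.2} \ {(x, y)} := by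
          rw [he]; exact hDxy
        exact h2.2 rfl
      exact lt_of_lt_of_le (Set.ncard_lt_ncard h1 (Set.toFinite _)) hcard
    by_cases hD'sep : ∀ c : V, ¬ Sep D' A B {c}
    · obtain ⟨l₁, l₂, w1, w2, n1, n2, dj⟩ := ih _ hlt D' A B le_rfl hD'sep
      exact ⟨l₁, l₂, ⟨w1.1, w1.2.1, hD'le w1.2.2⟩, ⟨w2.1, w2.2.1, hD'le w2.2.2⟩, n1, n2, dj⟩
    · push_neg at hD'sep
      obtain ⟨c, hc⟩ := hD'sep
      have W1x : Sep D A B ({c, x} : Set V) := by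
        intro l hl
        by_cases hx : x ∈ l
        · exact ⟨x, hx, Or.inr rfl⟩
        · obtain ⟨u, hu, hu'⟩ := hc l ⟨hl.1, hl.2.1, chain'_avoid_source hl.2.2
            (fun hm => hx (List.mem_of_mem_dropLast hm))⟩
          exact ⟨u, hu, Or.inl hu'⟩
      have W1y : Sep D A B ({c, y} : Set V) := by
        intro l hl
        by_cases hy : y ∈ l
        · exact ⟨y, hy, Or.inr rfl⟩
        · obtain ⟨u, hu, hu'⟩ := hc l ⟨hl.1, hl.2.1, chain'_avoid_target hl.2.2
            (fun hm => hy (List.mem_of_mem_tail hm))⟩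
          exact ⟨u, hu, Or.inl hu'⟩
      have hcx : c ≠ x := by
        rintro rfl
        exact h c (by rwa [Set.pair_eq_singleton] at W1x)
      have hcy : c ≠ y := by
        rintro rfl
        exact h c (by rwa [Set.pair_eq_singleton] at W1y)
      have C1 : ∀ d : V, ¬ Sep D' A ({c, x} : Set V) {d} := by
        intro d hd
        apply h d
        intro l hl
        obtain ⟨l₁, z, l₂, hldec, hz, hl₁⟩ := exists_first_hit (W1x l hl)
        have hpre : (l₁ ++ [z]) <+: l := ⟨l₂, by rw [hldec]; simp⟩
        have hwalk : IsWalk D' A ({c, x} : Set V) (l₁ ++ [z]) := by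
          refine ⟨?_, ⟨z, hz, List.getLast?_concat⟩, ?_⟩
          · obtain ⟨a, haA, hha⟩ := hl.1
            rw [hldec] at hha
            exact ⟨a, haA, (head?_eq_head?_append_cons l₁ [] l₂ z).trans hha⟩
          · refine chain'_avoid_source (hl.2.2.prefix hpre) ?_
            rw [List.dropLast_concat]
            exact fun hm => hl₁ x hm (Or.inr rfl)
        obtain ⟨u, hu, hud⟩ := hd _ hwalk
        exact ⟨u, hpre.subset hu, hud⟩
      have C2 : ∀ d : V, ¬ Sep D' ({c, y} : Set V) B {d} := by
        intro d hd
        apply h d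
        intro l hl
        obtain ⟨l₁, z, l₂, hldec, hz, hl₂⟩ := exists_last_hit (W1y l hl)
        have hsuf : (z :: l₂) <:+ l := ⟨l₁, hldec.symm⟩
        have hwalk : IsWalk D' ({c, y} : Set V) B (z :: l₂) := by
          refine ⟨⟨z, hz, rfl⟩, ?_, ?_⟩
          · obtain ⟨b, hbB, hgb⟩ := hl.2.1
            rw [hldec, getLast?_append_cons] at hgb
            exact ⟨b, hbB, hgb⟩
          · refine chain'_avoid_target (hl.2.2.suffix hsuf) ?_
            exact fun hm => hl₂ y (by simpa using hm) (Or.inr rfl)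
        obtain ⟨u, hu, hud⟩ := hd _ hwalk
        exact ⟨u, hsuf.subset hu, hud⟩
      obtain ⟨p₁, p₂, hp₁, hp₂, np₁, np₂, dp⟩ := ih _ hlt D' A ({c, x} : Set V) le_rfl C1
      obtain ⟨t₁, t₂, ht₁, ht₂, nt₁, nt₂, dt⟩ := ih _ hlt D' ({c, y} : Set V) B le_rfl C2
      obtain ⟨pa, pb, wpa, wpb, npa, npb, dpab, hxpa, hcpb⟩ :=
        orient_end hcx hp₁ hp₂ np₁ np₂ dp
      obtain ⟨ra, rb, wra, wrb, nra, nrb, drab, hyra, hcrb⟩ :=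
        orient_start hcy ht₁ ht₂ nt₁ nt₂ dt
      obtain ⟨q₁, wq₁, nq₁, sq₁, hcdr₁, hxq₁⟩ := trim_end wpa npa hxpa hcx
      rw [Set.pair_comm c x] at wpb
      obtain ⟨q₂, wq₂, nq₂, sq₂, hxdr₂, hcq₂⟩ := trim_end wpb npb hcpb (Ne.symm hcx)
      obtain ⟨r₁, wr₁, nr₁, sr₁, hctl₁, hyr₁⟩ := trim_start wra nra hyra hcy
      rw [Set.pair_comm c y] at wrb
      obtain ⟨r₂, wr₂, nr₂, sr₂, hytl₂, hcr₂⟩ := trim_start wrb nrb hcrb (Ne.symm hcy)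
      -- unpack endpoint data
      obtain ⟨hq₁A, hq₁last', hq₁ch⟩ := wq₁
      obtain ⟨hq₂A, hq₂last', hq₂ch⟩ := wq₂
      obtain ⟨hr₁head', hr₁B, hr₁ch⟩ := wr₁
      obtain ⟨hr₂head', hr₂B, hr₂ch⟩ := wr₂
      have hq₁last : q₁.getLast? = some c := by
        obtain ⟨u, hu, h'⟩ := hq₁last'
        rw [Set.mem_singleton_iff] at hu
        rwa [hu] at h'
      have hq₂last : q₂.getLast? = some x := by
        obtain ⟨u, hu, h'⟩ := hq₂last'
        rw [Set.mem_singleton_iff] at hu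
        rwa [hu] at h'
      have hr₁head : r₁.head? = some c := by
        obtain ⟨u, hu, h'⟩ := hr₁head'
        rw [Set.mem_singleton_iff] at hu
        rwa [hu] at h'
      have hr₂head : r₂.head? = some y := by
        obtain ⟨u, hu, h'⟩ := hr₂head'
        rw [Set.mem_singleton_iff] at hu
        rwa [hu] at h'
      -- cross facts
      have crossq₁r₁ : ∀ v ∈ q₁, v ∈ r₁ → v = c := by
        intro v hv hv'
        by_contra hvc
        exact cross hc hq₁A hq₁ch hcdr₁ hr₁B hr₁ch hctl₁ hv hv' hvc
      have crossq₁r₂ : ∀ v ∈ q₁, v ∉ r₂ := by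
        intro v hv hv'
        refine cross hc hq₁A hq₁ch hcdr₁ hr₂B hr₂ch
          (fun hm => hcr₂ (List.mem_of_mem_tail hm)) hv hv' ?_
        rintro rfl
        exact hcr₂ hv'
      have crossq₂r₁ : ∀ v ∈ q₂, v ∉ r₁ := by
        intro v hv hv'
        refine cross hc hq₂A hq₂ch
          (fun hm => hcq₂ (List.mem_of_mem_dropLast hm)) hr₁B hr₁ch hctl₁ hv hv' ?_
        rintro rfl
        exact hcq₂ hv
      have crossq₂r₂ : ∀ v ∈ q₂, v ∉ r₂ := by
        intro v hv hv'
        refine cross hc hq₂A hq₂ch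
          (fun hm => hcq₂ (List.mem_of_mem_dropLast hm)) hr₂B hr₂ch
          (fun hm => hcr₂ (List.mem_of_mem_tail hm)) hv hv' ?_
        rintro rfl
        exact hcq₂ hv
      have hq₁ne : q₁ ≠ [] := ne_nil_of_getLast? hq₁last
      have hq₂ne : q₂ ≠ [] := ne_nil_of_getLast? hq₂last
      have hr₂ne : r₂ ≠ [] := ne_nil_of_head? hr₂head
      refine ⟨q₁ ++ r₁.tail, q₂ ++ r₂, ⟨?_, ?_, ?_⟩, ⟨?_, ?_, ?_⟩, ?_, ?_, ?_⟩
      · obtain ⟨a, haA, hha⟩ := hq₁A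
        exact ⟨a, haA, by rw [head?_append_of_ne_nil _ _ hq₁ne]; exact hha⟩
      · obtain ⟨b, hbB, hgb⟩ := hr₁B
        by_cases hrt : r₁.tail = []
        · have hr₁c : r₁ = [c] := by
            have := eq_cons_of_head? hr₁head
            rw [hrt] at this
            exact this
          rw [hr₁c] at hgb
          simp only [List.getLast?_singleton, Option.some.injEq] at hgb
          refine ⟨b, hbB, ?_⟩
          rw [hrt, List.append_nil, hq₁last, hgb]
        · refine ⟨b, hbB, ?_⟩
          rw [List.getLast?_append_of_ne_nil _ hrt]
          rw [eq_cons_of_head? hr₁head] at hgb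
          rwa [show (c :: r₁.tail) = [c] ++ r₁.tail from rfl,
            List.getLast?_append_of_ne_nil _ hrt] at hgb
      · exact chain'_glue (hD'le hq₁ch) (hD'le hr₁ch) hq₁last hr₁head
      · obtain ⟨a, haA, hha⟩ := hq₂A
        exact ⟨a, haA, by rw [head?_append_of_ne_nil _ _ hq₂ne]; exact hha⟩
      · obtain ⟨b, hbB, hgb⟩ := hr₂B
        exact ⟨b, hbB, by rw [List.getLast?_append_of_ne_nil _ hr₂ne]; exact hgb⟩
      · unfold List.Chain'; rw [List.isChain_append]
        refine ⟨hD'le hq₂ch, hD'le hr₂ch, ?_⟩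
        intro u hu v hv
        rw [hq₂last, Option.mem_def, Option.some.injEq] at hu
        rw [hr₂head, Option.mem_def, Option.some.injEq] at hv
        subst hu; subst hv
        exact hDxy
      · rw [List.nodup_append]
        refine ⟨nq₁, (List.tail_sublist r₁).nodup nr₁, ?_⟩
        intro v hv v' hv' rfl
        have hvr₁ : v ∈ r₁ := List.mem_of_mem_tail hv'
        have := crossq₁r₁ v hv hvr₁
        subst this
        exact hctl₁ hv'
      · rw [List.nodup_append]
        exact ⟨nq₂, nr₂, fun v hv v' hv' hvv' => crossq₂r₂ v hv (hvv' ▸ hv')⟩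
      · intro v hv hv'
        rcases List.mem_append.1 hv with h1 | h1 <;> rcases List.mem_append.1 hv' with h2 | h2
        · exact dpab (sq₁ v h1) (sq₂ v h2)
        · exact crossq₁r₂ v h1 h2
        · exact crossq₂r₁ v h2 (List.mem_of_mem_tail h1)
        · exact drab (sr₁ v (List.mem_of_mem_tail h1)) (sr₂ v h2)

/-- The incidence digraph of a hypergraph. -/
def IncD (E : Finset (Finset V)) :
    (V ⊕ {e : Finset V // e ∈ E}) → (V ⊕ {e : Finset V // e ∈ E}) → Prop
  | Sum.inl v, Sum.inr e => v ∈ e.1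
  | Sum.inr e, Sum.inl v => v ∈ e.1
  | _, _ => False

lemma extract (E : Finset (Finset V)) :
    ∀ (n : ℕ) (l : List (V ⊕ {e : Finset V // e ∈ E})),
    l.length ≤ n → l.Chain' (IncD E) → l.Nodup →
    ∀ u v : V, l.head? = some (Sum.inl u) → l.getLast? = some (Sum.inl v) →
    ∃ (m : ℕ) (w : Fin (m+1) → V) (es : Fin m → {e : Finset V // e ∈ E}),
      Function.Injective w ∧ Function.Injective es ∧
      (∀ i : Fin m, w i.castSucc ∈ (es i).1 ∧ w i.succ ∈ (es i).1) ∧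
      w 0 = u ∧ w (Fin.last m) = v ∧
      (∀ x : V, (∃ i, w i = x) ↔ Sum.inl x ∈ l) ∧
      (∀ f : {e : Finset V // e ∈ E}, (∃ i, es i = f) ↔ Sum.inr f ∈ l) := by
  intro n
  induction n with
  | zero =>
    intro l hlen _ _ u v hh _
    rw [Nat.le_zero, List.length_eq_zero_iff] at hlen
    subst hlen
    simp at hh
  | succ n IH =>
    intro l hlen hch hnd u v hh hg
    rcases l with _ | ⟨a, l'⟩
    · simp at hh
    have ha : a = Sum.inl u := by
      simpa using hh
    subst ha
    rcases l' with _ | ⟨b, l''⟩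
    · -- singleton
      have huv : u = v := by
        simp only [List.getLast?_singleton, Option.some.injEq] at hg
        exact Sum.inl.inj hg
      subst huv
      refine ⟨0, fun _ => u, Fin.elim0, fun i j _ => by fin_cases i <;> fin_cases j <;> rfl,
        fun i => i.elim0, fun i => i.elim0, rfl, rfl, ?_, ?_⟩
      · intro x
        constructor
        · rintro ⟨i, rfl⟩; simp
        · intro hx
          simp only [List.mem_singleton] at hx
          exact ⟨0, by injection hx.symm⟩
      · intro f
        constructor
        · rintro ⟨i, -⟩; exact i.elim0
        · intro hf; simp at hf
    · rcases b with w' | f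
      · exact ((List.isChain_cons_cons.1 hch).1).elim
      rcases l'' with _ | ⟨cc, l₃⟩
      · simp at hg
      rcases cc with u' | f'
      swap
      · exact ((List.isChain_cons_cons.1 (List.isChain_cons_cons.1 hch).2).1).elim
      -- l = inl u :: inr f :: inl u' :: l₃
      have hu_f : u ∈ f.1 := (List.isChain_cons_cons.1 hch).1
      have hu'_f : u' ∈ f.1 := (List.isChain_cons_cons.1 (List.isChain_cons_cons.1 hch).2).1
      have hch' : (Sum.inl u' :: l₃ : List _).Chain' (IncD E) :=
        (List.isChain_cons_cons.1 (List.isChain_cons_cons.1 hch).2).2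
      have hnd' : (Sum.inl u' :: l₃ : List _).Nodup := by
        rw [List.nodup_cons, List.nodup_cons] at hnd
        exact hnd.2.2
      have hlen' : (Sum.inl u' :: l₃ : List _).length ≤ n := by
        simp only [List.length_cons] at hlen ⊢
        omega
      have hg' : (Sum.inl u' :: l₃ : List _).getLast? = some (Sum.inl v) := by
        rw [List.getLast?_cons_cons, List.getLast?_cons_cons] at hg
        exact hg
      obtain ⟨m, w, es, hwinj, hesinj, hadj, hw0, hwlast, hwrange, hesrange⟩ :=
        IH _ hlen' hch' hnd' u' v rfl hg'
      have hinl_u_notin : (Sum.inl u : V ⊕ {e // e ∈ E}) ∉ (Sum.inl u' :: l₃ : List _) := by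
        rw [List.nodup_cons] at hnd
        exact fun hmem => hnd.1 (List.mem_cons_of_mem _ hmem)
      have hinr_f_notin : (Sum.inr f : V ⊕ {e // e ∈ E}) ∉ (Sum.inl u' :: l₃ : List _) := by
        rw [List.nodup_cons, List.nodup_cons] at hnd
        exact hnd.2.1
      refine ⟨m + 1, Fin.cons u w, Fin.cons f es, ?_, ?_, ?_, ?_, ?_, ?_, ?_⟩
      · rw [Fin.cons_injective_iff]
        refine ⟨?_, hwinj⟩
        rintro ⟨i, hi⟩
        exact hinl_u_notin ((hwrange u).1 ⟨i, hi⟩)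
      · rw [Fin.cons_injective_iff]
        refine ⟨?_, hesinj⟩
        rintro ⟨i, hi⟩
        exact hinr_f_notin ((hesrange f).1 ⟨i, hi⟩)
      · intro i
        refine Fin.cases ?_ ?_ i
        · constructor
          · rw [Fin.castSucc_zero, Fin.cons_zero]
            exact hu_f
          · have : (0 : Fin (m+1)).succ = (0 : Fin (m+1)).succ := rfl
            rw [Fin.cons_succ, Fin.cons_zero, hw0]
            exact hu'_f
        · intro j
          constructor
          · rw [Fin.cons_succ]
            rw [← Fin.succ_castSucc, Fin.cons_succ]
            exact (hadj j).1
          · rw [Fin.cons_succ, Fin.cons_succ]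
            exact (hadj j).2
      · exact Fin.cons_zero _ _
      · rw [← Fin.succ_last, Fin.cons_succ]
        exact hwlast
      · intro x
        rw [Fin.exists_fin_succ]
        simp only [Fin.cons_zero, Fin.cons_succ, List.mem_cons]
        rw [hwrange x]
        constructor
        · rintro (rfl | hx)
          · exact Or.inl rfl
          · right; right
            simpa using hx
        · rintro (hx | hx | hx)
          · exact Or.inl (by injection hx.symm)
          · exact absurd hx (by simp)
          · exact Or.inr (by simpa using hx)
      · intro g
        rw [Fin.exists_fin_succ]
        simp only [Fin.cons_zero, Fin.cons_succ, List.mem_cons]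
        rw [hesrange g]
        constructor
        · rintro (rfl | hx)
          · exact Or.inr (Or.inl rfl)
          · right; right
            simpa using hx
        · rintro (hx | hx | hx)
          · exact absurd hx (by simp)
          · exact Or.inl (by injection hx.symm)
          · exact Or.inr (by simpa using hx)

end BergeAux

end BergeAuxSection

/-- In a 2-connected `r`-uniform hypergraph (`r ≥ 3`), for any two disjoint vertex
sets `S₁, S₂` of size at least 2, there are two Berge paths from `S₁` to `S₂`
sharing no defining vertices and no defining hyperedges. -/
theorem two_disjoint_bergePaths {V : Type*} [Fintype V]
    (E : Finset (Finset V)) (r : ℕ) (hr : r ≥ 3)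
    (huniform : ∀ e ∈ E, e.card = r) (h2conn : HTwoConnected E)
    (S₁ S₂ : Finset V) (hdisj : Disjoint S₁ S₂)
    (hS₁ : 2 ≤ S₁.card) (hS₂ : 2 ≤ S₂.card) :
    ∃ (m₁ m₂ : ℕ) (w₁ : Fin (m₁ + 1) → V) (e₁ : Fin m₁ → Finset V)
      (w₂ : Fin (m₂ + 1) → V) (e₂ : Fin m₂ → Finset V),
      Function.Injective w₁ ∧ Function.Injective e₁ ∧
      Function.Injective w₂ ∧ Function.Injective e₂ ∧
      (∀ i : Fin m₁, e₁ i ∈ E ∧ w₁ i.castSucc ∈ e₁ i ∧ w₁ i.succ ∈ e₁ i) ∧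
      (∀ i : Fin m₂, e₂ i ∈ E ∧ w₂ i.castSucc ∈ e₂ i ∧ w₂ i.succ ∈ e₂ i) ∧
      w₁ 0 ∈ S₁ ∧ w₁ (Fin.last m₁) ∈ S₂ ∧
      w₂ 0 ∈ S₁ ∧ w₂ (Fin.last m₂) ∈ S₂ ∧
      w₁ 0 ≠ w₂ 0 ∧ w₁ (Fin.last m₁) ≠ w₂ (Fin.last m₂) ∧
      (∀ i j, w₁ i ≠ w₂ j) ∧ (∀ i j, e₁ i ≠ e₂ j) := by
  classical
  open BergeAux in
  set W := V ⊕ {e : Finset V // e ∈ E} with hW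
  set D : W → W → Prop := IncD E with hD
  set A : Set W := Sum.inl '' (↑S₁ : Set V) with hA
  set B : Set W := Sum.inl '' (↑S₂ : Set V) with hB
  -- pick two distinct elements in each S
  obtain ⟨sa, hsa, sb, hsb, hsab⟩ := Finset.one_lt_card.1 (lt_of_lt_of_le one_lt_two hS₁)
  obtain ⟨ta, hta, tb, htb, htab⟩ := Finset.one_lt_card.1 (lt_of_lt_of_le one_lt_two hS₂)
  haveI : Nonempty W := ⟨Sum.inl sa⟩
  -- the separation hypothesis
  have hsep : ∀ c : W, ¬ Sep D A B {c} := by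
    intro c hSep
    -- reachability avoiding c
    set Reach : W → Prop := fun p => ∃ l : List W, l.Chain' D ∧
      (∃ a ∈ A, l.head? = some a) ∧ l.getLast? = some p ∧ c ∉ l with hReach
    have extend : ∀ (u u' : V) (e : Finset V) (he : e ∈ E), u ∈ e → u' ∈ e →
        Reach (Sum.inl u) → (Sum.inr ⟨e, he⟩ : W) ≠ c → (Sum.inl u' : W) ≠ c →
        Reach (Sum.inl u') := by
      rintro u u' e he hu hu' ⟨l, hch, hhead, hlast, hcl⟩ hne hne'
      refine ⟨l ++ [Sum.inr ⟨e, he⟩, Sum.inl u'], ?_, ?_, ?_, ?_⟩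
      · unfold List.Chain'; rw [List.isChain_append]
        refine ⟨hch, List.isChain_pair.2 hu', ?_⟩
        intro p hp q hq
        rw [hlast, Option.mem_def, Option.some.injEq] at hp
        simp only [List.head?_cons, Option.mem_def, Option.some.injEq] at hq
        subst hp; subst hq
        exact hu
      · obtain ⟨a, ha, hha⟩ := hhead
        exact ⟨a, ha, by
          rw [head?_append_of_ne_nil _ _ (ne_nil_of_getLast? hlast)]; exact hha⟩
      · rw [List.getLast?_append_of_ne_nil _ (by simp)]
        simp
      · intro hmem
        rcases List.mem_append.1 hmem with hm | hm
        · exact hcl hm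
        · simp only [List.mem_cons, List.mem_singleton, List.not_mem_nil, or_false] at hm
          rcases hm with hm | hm
          · exact hne hm.symm
          · exact hne' hm.symm
    have reach_triv : ∀ s : V, s ∈ S₁ → (Sum.inl s : W) ≠ c → Reach (Sum.inl s) := by
      intro s hs hne
      exact ⟨[Sum.inl s], List.isChain_singleton _, ⟨Sum.inl s, ⟨s, hs, rfl⟩, rfl⟩, rfl, by
        simpa using hne.symm⟩
    have reach_B : ∀ s : V, s ∈ S₂ → ¬ Reach (Sum.inl s) := by
      rintro s hs ⟨l, hch, hhead, hlast, hcl⟩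
      obtain ⟨u, hu, hu'⟩ := hSep l ⟨hhead, ⟨Sum.inl s, ⟨s, hs, rfl⟩, hlast⟩, hch⟩
      rw [Set.mem_singleton_iff] at hu'
      subst hu'
      exact hcl hu
    rcases c with v₀ | e₀
    · -- c is a vertex: cut vertex
      apply h2conn.2.1 v₀
      have hs1 : ∃ s ∈ S₁, s ≠ v₀ := by
        by_cases h : sa = v₀
        · exact ⟨sb, hsb, fun he => hsab (h ▸ he ▸ rfl)⟩
        · exact ⟨sa, hsa, h⟩
      have hs2 : ∃ s ∈ S₂, s ≠ v₀ := by
        by_cases h : ta = v₀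
        · exact ⟨tb, htb, fun he => htab (h ▸ he ▸ rfl)⟩
        · exact ⟨ta, hta, h⟩
      obtain ⟨s₁, hs₁S, hs₁v⟩ := hs1
      obtain ⟨s₂, hs₂S, hs₂v⟩ := hs2
      refine ⟨{u : V | u ≠ v₀ ∧ Reach (Sum.inl u)}, {u : V | u ≠ v₀ ∧ ¬ Reach (Sum.inl u)},
        ⟨s₁, hs₁v, reach_triv s₁ hs₁S (by simp [hs₁v])⟩,
        ⟨s₂, hs₂v, reach_B s₂ hs₂S⟩, ?_, fun h => h.1 rfl, fun h => h.1 rfl, ?_, ?_⟩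
      · rw [Set.disjoint_left]
        rintro u ⟨-, h2⟩ ⟨-, h4⟩
        exact h4 h2
      · intro xx
        by_cases hx : xx = v₀
        · exact Or.inl hx
        · rcases Classical.em (Reach (Sum.inl xx)) with hrx | hrx
          · exact Or.inr (Or.inl ⟨hx, hrx⟩)
          · exact Or.inr (Or.inr ⟨hx, hrx⟩)
      · intro e he
        rcases Classical.em (∃ u ∈ e, u ≠ v₀ ∧ Reach (Sum.inl u)) with hex | hex
        · left
          obtain ⟨u, hue, huv, hur⟩ := hex
          intro u' hu'e
          rw [Finset.mem_coe] at hu'e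
          by_cases hu'v : u' = v₀
          · exact hu'v ▸ Set.mem_insert _ _
          · exact Set.mem_insert_iff.2 (Or.inr ⟨hu'v,
              extend u u' e he hue hu'e hur (by simp) (by simp [hu'v])⟩)
        · right
          push_neg at hex
          intro u' hu'e
          rw [Finset.mem_coe] at hu'e
          by_cases hu'v : u' = v₀
          · exact hu'v ▸ Set.mem_insert _ _
          · exact Set.mem_insert_iff.2 (Or.inr ⟨hu'v, hex u' hu'e hu'v⟩)
    · -- c is a hyperedge: cut edge
      apply h2conn.2.2 e₀.1
      refine ⟨e₀.2, {u : V | Reach (Sum.inl u)}, {u : V | ¬ Reach (Sum.inl u)},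
        ⟨sa, reach_triv sa hsa (by simp)⟩, ⟨ta, reach_B ta hta⟩, ?_, ?_, ?_⟩
      · rw [Set.disjoint_left]
        intro u h1 h2
        exact h2 h1
      · intro xx
        rcases Classical.em (Reach (Sum.inl xx)) with hrx | hrx
        · exact Or.inl hrx
        · exact Or.inr hrx
      · intro f hf hfne
        rcases Classical.em (∃ u ∈ f, Reach (Sum.inl u)) with hex | hex
        · left
          obtain ⟨u, hue, hur⟩ := hex
          intro u' hu'e
          rw [Finset.mem_coe] at hu'e
          exact extend u u' f hf hue hu'e hur
            (by simp only [ne_eq, Sum.inr.injEq]; exact fun he => hfne (by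
              rw [← he])) (by simp)
        · right
          push_neg at hex
          intro u' hu'e
          rw [Finset.mem_coe] at hu'e
          exact hex u' hu'e
  -- apply Menger
  obtain ⟨l₁, l₂, hw₁, hw₂, hnd₁, hnd₂, hdisjl⟩ :=
    menger_aux {p : W × W | D p.1 p.2}.ncard D A B le_rfl hsep
  -- extract Berge paths
  obtain ⟨a₁, ⟨u₁, hu₁S, hu₁e⟩, hha₁⟩ := hw₁.1
  obtain ⟨b₁, ⟨v₁, hv₁S, hv₁e⟩, hgb₁⟩ := hw₁.2.1
  obtain ⟨a₂, ⟨u₂, hu₂S, hu₂e⟩, hha₂⟩ := hw₂.1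
  obtain ⟨b₂, ⟨v₂, hv₂S, hv₂e⟩, hgb₂⟩ := hw₂.2.1
  subst hu₁e; subst hv₁e; subst hu₂e; subst hv₂e
  obtain ⟨m₁, w₁, es₁, hw₁inj, hes₁inj, hadj₁, hw₁0, hw₁last, hw₁range, hes₁range⟩ :=
    extract E l₁.length l₁ le_rfl hw₁.2.2 hnd₁ u₁ v₁ hha₁ hgb₁
  obtain ⟨m₂, w₂, es₂, hw₂inj, hes₂inj, hadj₂, hw₂0, hw₂last, hw₂range, hes₂range⟩ :=
    extract E l₂.length l₂ le_rfl hw₂.2.2 hnd₂ u₂ v₂ hha₂ hgb₂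
  have hwcross : ∀ i j, w₁ i ≠ w₂ j := by
    intro i j he
    exact hdisjl ((hw₁range (w₁ i)).1 ⟨i, rfl⟩) (he ▸ (hw₂range (w₂ j)).1 ⟨j, rfl⟩)
  have hescross : ∀ i j, (es₁ i).1 ≠ (es₂ j).1 := by
    intro i j he
    have h2 : es₁ i = es₂ j := Subtype.ext he
    exact hdisjl ((hes₁range (es₁ i)).1 ⟨i, rfl⟩) (h2 ▸ (hes₂range (es₂ j)).1 ⟨j, rfl⟩)
  refine ⟨m₁, m₂, w₁, fun i => (es₁ i).1, w₂, fun i => (es₂ i).1,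
    hw₁inj, fun i j hij => hes₁inj (Subtype.ext hij), hw₂inj,
    fun i j hij => hes₂inj (Subtype.ext hij),
    fun i => ⟨(es₁ i).2, (hadj₁ i).1, (hadj₁ i).2⟩,
    fun i => ⟨(es₂ i).2, (hadj₂ i).1, (hadj₂ i).2⟩,
    hw₁0 ▸ hu₁S, hw₁last ▸ hv₁S, hw₂0 ▸ hu₂S, hw₂last ▸ hv₂S,
    hwcross 0 0, hwcross _ _, hwcross, hescross⟩
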